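/- Let a, c, ℓ, n be real numbers with 1 < a < 13/12, c ≥ 1, ℓ ≥ 0, and n ≥ 6. Then c·a^(ℓ-1)·(a^(6/(c·a^(ℓ-1)·n)) - 1) < 1/n. -/

import Mathlib

theorem stmt_4 (a c ℓ n : ℝ) (ha1 : 1 < a) (ha2 : a < 13 / 12)
    (hc : 1 ≤ c) (hℓ : 0 ≤ ℓ) (hn : 6 ≤ n) :
    c * a ^ (ℓ - 1) * (a ^ (6 / (c * a ^ (ℓ - 1) * n)) - 1) < 1 / n := by
  have ha0 : (0:ℝ) < a := by linarith
  set M : ℝ := c * a ^ (ℓ - 1) with hMdef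
  have hM0 : 0 < M := by positivity
  have hn0 : (0:ℝ) < n := by linarith
  -- lower bound on M
  have hinv : a ^ (-1 : ℝ) ≤ a ^ (ℓ - 1) :=
    Real.rpow_le_rpow_of_exponent_le ha1.le (by linarith)
  have hMlb : 12 / 13 < M := by
    have h1 : a ^ (-1 : ℝ) = a⁻¹ := Real.rpow_neg_one a
    have h2 : (12:ℝ)/13 < a⁻¹ := by
      rw [lt_inv_comm₀ (by norm_num) ha0]; linarith
    have h3 : a ^ (ℓ - 1) ≤ M := by
      rw [hMdef]; nlinarith [Real.rpow_pos_of_pos ha0 (ℓ - 1)]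
    rw [h1] at hinv; linarith
  set s : ℝ := 6 / (M * n) with hsdef
  have hs0 : 0 < s := by positivity
  have hMn : (72:ℝ)/13 ≤ M * n := by nlinarith
  have hs' : s ≤ 13 / 12 := by
    rw [hsdef, div_le_iff₀ (by positivity)]; nlinarith
  have hlog : 0 < Real.log a := Real.log_pos ha1
  have hloga : Real.log a < 1 / 12 := by
    have := Real.log_lt_sub_one_of_pos ha0 (by linarith : a ≠ 1)
    linarith
  set t : ℝ := Real.log a * s with htdef
  have ht0 : 0 < t := by positivity
  have ht : t < 13 / 144 := by
    rw [htdef]; nlinarith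
  have h1t : 0 < 1 - t := by linarith
  have hexp : Real.exp t ≤ (1 - t)⁻¹ := by
    have h := Real.add_one_le_exp (-t)
    rw [Real.exp_neg] at h
    have hep := Real.exp_pos t
    have hmul : Real.exp t * (1 - t) ≤ 1 := by
      have h2 : (Real.exp t)⁻¹ * Real.exp t = 1 := inv_mul_cancel₀ (ne_of_gt hep)
      nlinarith
    have h3 : (1 - t)⁻¹ * (1 - t) = 1 := inv_mul_cancel₀ (ne_of_gt h1t)
    nlinarith
  have hrpow : a ^ s = Real.exp t := by
    rw [Real.rpow_def_of_pos ha0, htdef]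
  have hkey : Real.exp t - 1 < s / 6 := by
    have hinv : (1 - t)⁻¹ < 1 + s / 6 := by
      have hts : t * (6 + s) < s := by
        rw [htdef]; nlinarith
      rw [inv_eq_one_div, div_lt_iff₀ h1t]
      nlinarith
    linarith
  have hMs : M * s = 6 / n := by
    rw [hsdef]; field_simp
  have : M * (a ^ s - 1) < 1 / n := by
    rw [hrpow]
    have h6 : M * (s / 6) = 1 / n := by
      rw [show M * (s / 6) = (M * s) / 6 from by ring, hMs]
      field_simp
    calc M * (Real.exp t - 1) < M * (s / 6) := by
          apply mul_lt_mul_of_pos_left hkey hM0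
      _ = 1 / n := h6
  exact this
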